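/- Let n, m ≥ 1 and let A : ℝⁿ → L(ℂ^{m(1+n)}) be continuously differentiable with A⊥⊥(x) invertible for every x. Set B(x) := Â(x) and Ã(x) := (A(x)*)^ (the transform of the pointwise Hermitian adjoint, which is well defined since (A*)⊥⊥ = (A⊥⊥)* is invertible). Then for all compactly supported continuously differentiable functions f, g : ℝⁿ → ℂ^{m(1+n)}: ∫_{ℝⁿ} ⟨g(x), N B(x) (Df)(x)⟩ dx = − ∫_{ℝⁿ} ⟨D(Ã g)(x), N f(x)⟩ dx, where (Ã g)(x) := Ã(x) g(x). -/

import Mathlib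

noncomputable section

open MeasureTheory Real ContinuousLinearMap

/-- The "normal" component space `ℂ^m`. -/
abbrev NormalSp (m : ℕ) := EuclideanSpace ℂ (Fin m)
/-- The "tangential" component space `ℂ^{mn} ≅ (ℂ^m)ⁿ`. -/
abbrev TangSp (m n : ℕ) := EuclideanSpace ℂ (Fin m × Fin n)
/-- The full space `ℂ^{m(1+n)} = ℂ^m ⊕ ℂ^{mn}`. -/
abbrev FullSp (m n : ℕ) := EuclideanSpace ℂ (Fin m ⊕ Fin m × Fin n)
/-- `ℝⁿ` with the Euclidean structure. -/
abbrev Rn (n : ℕ) := EuclideanSpace ℝ (Fin n)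

namespace LayerPotential

variable {m n : ℕ}

/-- Injection of the normal part `ℂ^m → ℂ^{m(1+n)}`, `a ↦ (a, 0)`. -/
def injN (m n : ℕ) : NormalSp m →L[ℂ] FullSp m n :=
  LinearMap.toContinuousLinearMap
  { toFun := fun a => WithLp.toLp 2 (Sum.elim a 0 : Fin m ⊕ Fin m × Fin n → ℂ)
    map_add' := by
      intro a b; ext idx; rcases idx with i | p <;> simp
    map_smul' := by
      intro c a; ext idx; rcases idx with i | p <;> simp }

/-- Injection of the tangential part `ℂ^{mn} → ℂ^{m(1+n)}`, `b ↦ (0, b)`. -/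
def injT (m n : ℕ) : TangSp m n →L[ℂ] FullSp m n :=
  LinearMap.toContinuousLinearMap
  { toFun := fun b => WithLp.toLp 2 (Sum.elim 0 b : Fin m ⊕ Fin m × Fin n → ℂ)
    map_add' := by
      intro a b; ext idx; rcases idx with i | p <;> simp
    map_smul' := by
      intro c a; ext idx; rcases idx with i | p <;> simp }

/-- Projection onto the normal part `f ↦ f⊥`. -/
def projN (m n : ℕ) : FullSp m n →L[ℂ] NormalSp m :=
  LinearMap.toContinuousLinearMap
  { toFun := fun f => WithLp.toLp 2 (fun i => f (Sum.inl i) : Fin m → ℂ)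
    map_add' := by intro a b; ext i; simp
    map_smul' := by intro c a; ext i; simp }

/-- Projection onto the tangential part `f ↦ f∥`. -/
def projT (m n : ℕ) : FullSp m n →L[ℂ] TangSp m n :=
  LinearMap.toContinuousLinearMap
  { toFun := fun f => WithLp.toLp 2 (fun p => f (Sum.inr p) : Fin m × Fin n → ℂ)
    map_add' := by intro a b; ext p; simp
    map_smul' := by intro c a; ext p; simp }

/-- The corner block `A⊥⊥`. -/
def blockNN (A : FullSp m n →L[ℂ] FullSp m n) : NormalSp m →L[ℂ] NormalSp m :=
  projN m n ∘L A ∘L injN m n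

/-- The block `A⊥∥`. -/
def blockNT (A : FullSp m n →L[ℂ] FullSp m n) : TangSp m n →L[ℂ] NormalSp m :=
  projN m n ∘L A ∘L injT m n

/-- The block `A∥⊥`. -/
def blockTN (A : FullSp m n →L[ℂ] FullSp m n) : NormalSp m →L[ℂ] TangSp m n :=
  projT m n ∘L A ∘L injN m n

/-- The block `A∥∥`. -/
def blockTT (A : FullSp m n →L[ℂ] FullSp m n) : TangSp m n →L[ℂ] TangSp m n :=
  projT m n ∘L A ∘L injT m n

/-- The transformed matrix `Â`, defined using `Ring.inverse` of the corner block
(which is the honest inverse whenever `A⊥⊥` is invertible). -/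
def hatT (A : FullSp m n →L[ℂ] FullSp m n) : FullSp m n →L[ℂ] FullSp m n :=
  injN m n ∘L ((Ring.inverse (blockNN A)) ∘L projN m n
      - ((Ring.inverse (blockNN A)) ∘L blockNT A) ∘L projT m n)
  + injT m n ∘L ((blockTN A ∘L (Ring.inverse (blockNN A))) ∘L projN m n
      + (blockTT A - (blockTN A ∘L (Ring.inverse (blockNN A))) ∘L blockNT A) ∘L projT m n)

/-- The reflection `N(f⊥, f∥) = (−f⊥, f∥)`. -/
def reflN (m n : ℕ) : FullSp m n →L[ℂ] FullSp m n :=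
  injT m n ∘L projT m n - injN m n ∘L projN m n



/-- The lower triangular factor `[[1,0],[−σ,I]] : (a,b) ↦ (a, b − a⊗σ)`. -/
def lowTri (m : ℕ) (σ : Fin n → ℝ) : FullSp m n →L[ℂ] FullSp m n :=
  LinearMap.toContinuousLinearMap
  { toFun := fun f => WithLp.toLp 2 (Sum.elim (fun i => f (Sum.inl i))
      (fun p => f (Sum.inr p) - (σ p.2 : ℂ) * f (Sum.inl p.1)) :
        Fin m ⊕ Fin m × Fin n → ℂ)
    map_add' := by
      intro a b; ext idx; rcases idx with i | p <;> simp <;> ring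
    map_smul' := by
      intro c a; ext idx; rcases idx with i | p <;> simp <;> ring }

/-- The upper triangular factor `[[1,−σᵗ],[0,I]] : (a,b) ↦ (a − Σ_k σ_k b_k, b)`. -/
def upTri (m : ℕ) (σ : Fin n → ℝ) : FullSp m n →L[ℂ] FullSp m n :=
  LinearMap.toContinuousLinearMap
  { toFun := fun f => WithLp.toLp 2 (Sum.elim (fun i => f (Sum.inl i) - ∑ k, (σ k : ℂ) * f (Sum.inr (i, k)))
      (fun p => f (Sum.inr p)) : Fin m ⊕ Fin m × Fin n → ℂ)
    map_add' := by
      intro a b; ext idx; rcases idx with i | p <;>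
        simp [Finset.sum_add_distrib, mul_add] <;> ring
    map_smul' := by
      intro c a; ext idx; rcases idx with i | p <;>
        simp [Finset.mul_sum, mul_assoc, mul_left_comm, mul_sub] }

/-- The transformed coefficients `A_σ := [[1,−σᵗ],[0,I]] · A · [[1,0],[−σ,I]]`. -/
def coeffSigma (σ : Fin n → ℝ) (A : FullSp m n →L[ℂ] FullSp m n) :
    FullSp m n →L[ℂ] FullSp m n :=
  upTri m σ ∘L A ∘L lowTri m σ

/-- The map `g ↦ (ν₀ g⊥, g⊥ ⊗ ν)`. -/
def tensorMap (m : ℕ) (ν₀ : ℝ) (ν : Fin n → ℝ) : FullSp m n →L[ℂ] FullSp m n :=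
  LinearMap.toContinuousLinearMap
  { toFun := fun g => WithLp.toLp 2 (Sum.elim (fun i => (ν₀ : ℂ) * g (Sum.inl i))
      (fun p => (ν p.2 : ℂ) * g (Sum.inl p.1)) : Fin m ⊕ Fin m × Fin n → ℂ)
    map_add' := by
      intro a b; ext idx; rcases idx with i | p <;> simp <;> ring
    map_smul' := by
      intro c a; ext idx; rcases idx with i | p <;> simp <;> ring }

/-- The map `h ↦ (Σ_k ν_k h∥,k, −ν₀ h∥)`. -/
def contractMap (m : ℕ) (ν₀ : ℝ) (ν : Fin n → ℝ) : FullSp m n →L[ℂ] FullSp m n :=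
  LinearMap.toContinuousLinearMap
  { toFun := fun h => WithLp.toLp 2 (Sum.elim (fun i => ∑ k, (ν k : ℂ) * h (Sum.inr (i, k)))
      (fun p => -(ν₀ : ℂ) * h (Sum.inr p)) : Fin m ⊕ Fin m × Fin n → ℂ)
    map_add' := by
      intro a b; ext idx; rcases idx with i | p <;>
        simp [Finset.sum_add_distrib, mul_add] <;> ring
    map_smul' := by
      intro c a; ext idx; rcases idx with i | p <;>
        simp [Finset.mul_sum, mul_assoc, mul_left_comm, mul_sub] }

/-- The one-form coefficients `Λ_A(ν₀, ν)g := A(ν₀ g⊥, g⊥⊗ν) + (Σ_k ν_k (Ag)∥,k, −ν₀ (Ag)∥)`. -/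
def lambdaForm (A : FullSp m n →L[ℂ] FullSp m n) (ν₀ : ℝ) (ν : Fin n → ℝ) :
    FullSp m n →L[ℂ] FullSp m n :=
  A ∘L tensorMap m ν₀ ν + contractMap m ν₀ ν ∘L A

/-- Partial derivative `∂_k` of a scalar function on `ℝⁿ`. -/
def pd (k : Fin n) (g : Rn n → ℂ) (x : Rn n) : ℂ :=
  fderiv ℝ g x (EuclideanSpace.single k 1)

/-- The self-adjoint first order operator `D(g⊥, g∥) := (div g∥, −∇g⊥)` acting on
functions `ℝⁿ → ℂ^{m(1+n)}`. -/
def Dop (g : Rn n → FullSp m n) (x : Rn n) : FullSp m n :=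
  WithLp.toLp 2 (Sum.elim (fun i => ∑ k, pd k (fun y => g y (Sum.inr (i, k))) x)
    (fun p => - pd p.2 (fun y => g y (Sum.inl p.1)) x) : Fin m ⊕ Fin m × Fin n → ℂ)

/-- Partial derivative `∂_t` of a scalar function on `ℝ^{1+n} = ℝ × ℝⁿ`. -/
def pdt (F : ℝ × Rn n → ℂ) (q : ℝ × Rn n) : ℂ :=
  fderiv ℝ F q (1, 0)

/-- Partial derivative `∂_{x_k}` of a scalar function on `ℝ^{1+n} = ℝ × ℝⁿ`. -/
def pdx (k : Fin n) (F : ℝ × Rn n → ℂ) (q : ℝ × Rn n) : ℂ :=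
  fderiv ℝ F q (0, EuclideanSpace.single k 1)

/-- `∂_t` of a `ℂ^{m(1+n)}`-valued function, componentwise. -/
def pdtVec (F : ℝ × Rn n → FullSp m n) (q : ℝ × Rn n) : FullSp m n :=
  WithLp.toLp 2 (fun idx => pdt (fun r => F r idx) q : Fin m ⊕ Fin m × Fin n → ℂ)

/-- The full gradient `∇u = (∂_t u, ∇_x u)` of a `ℂ^m`-valued function on `ℝ^{1+n}`. -/
def fullGrad (u : ℝ × Rn n → NormalSp m) (q : ℝ × Rn n) : FullSp m n :=
  WithLp.toLp 2 (Sum.elim (fun i => pdt (fun r => u r i) q)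
    (fun p => pdx p.2 (fun r => u r p.1) q) : Fin m ⊕ Fin m × Fin n → ℂ)

/-- The divergence `div G = ∂_t G⊥ + Σ_k ∂_{x_k} G∥,k` of a `ℂ^{m(1+n)}`-valued field
on `ℝ^{1+n}`, valued in `ℂ^m`. -/
def divOp (G : ℝ × Rn n → FullSp m n) (q : ℝ × Rn n) : NormalSp m :=
  WithLp.toLp 2 (fun i => pdt (fun r => G r (Sum.inl i)) q
    + ∑ k, pdx k (fun r => G r (Sum.inr (i, k))) q : Fin m → ℂ)

/-- `u` is a weak (here: classical) solution of `div A∇u = 0` on `Ω`,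
for `t`-independent coefficients `A`. -/
def SolvesDiv (A : Rn n → FullSp m n →L[ℂ] FullSp m n) (u : ℝ × Rn n → NormalSp m)
    (Ω : Set (ℝ × Rn n)) : Prop :=
  ∀ q ∈ Ω, divOp (fun r => A r.2 (fullGrad u r)) q = 0

/-- The conormal gradient `∇_A u = ((A∇u)⊥, ∇_x u)`. -/
def conormalGrad (A : Rn n → FullSp m n →L[ℂ] FullSp m n) (u : ℝ × Rn n → NormalSp m)
    (q : ℝ × Rn n) : FullSp m n :=
  WithLp.toLp 2 (Sum.elim (fun i => (A q.2 (fullGrad u q)) (Sum.inl i))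
    (fun p => pdx p.2 (fun r => u r p.1) q) : Fin m ⊕ Fin m × Fin n → ℂ)



-- applied forms
@[simp] lemma injN_apply (a : NormalSp m) (idx) :
    injN m n a idx = Sum.elim a (fun _ => (0:ℂ)) idx := rfl
@[simp] lemma injT_apply (b : TangSp m n) (idx) :
    injT m n b idx = Sum.elim (fun _ => (0:ℂ)) b idx := rfl
@[simp] lemma projN_apply (f : FullSp m n) (i) : projN m n f i = f (Sum.inl i) := rfl
@[simp] lemma projT_apply (f : FullSp m n) (p) : projT m n f p = f (Sum.inr p) := rfl

lemma adjoint_injN : adjoint (injN m n) = projN m n := by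
  symm; rw [eq_adjoint_iff]
  intro x y
  simp [PiLp.inner_apply, RCLike.inner_apply, Fintype.sum_sum_type]

lemma adjoint_injT : adjoint (injT m n) = projT m n := by
  symm; rw [eq_adjoint_iff]
  intro x y
  simp [PiLp.inner_apply, RCLike.inner_apply, Fintype.sum_sum_type]

lemma adjoint_projN : adjoint (projN m n) = injN m n := by
  rw [← adjoint_injN, ContinuousLinearMap.adjoint_adjoint]

lemma adjoint_projT : adjoint (projT m n) = injT m n := by
  rw [← adjoint_injT, ContinuousLinearMap.adjoint_adjoint]

lemma adjoint_blockNN (T : FullSp m n →L[ℂ] FullSp m n) :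
    adjoint (blockNN T) = blockNN (adjoint T) := by
  simp [blockNN, adjoint_comp, adjoint_injN, adjoint_projN, comp_assoc]

lemma adjoint_blockNT (T : FullSp m n →L[ℂ] FullSp m n) :
    adjoint (blockNT T) = blockTN (adjoint T) := by
  simp [blockNT, blockTN, adjoint_comp, adjoint_injT, adjoint_projN, comp_assoc]

lemma adjoint_blockTN (T : FullSp m n →L[ℂ] FullSp m n) :
    adjoint (blockTN T) = blockNT (adjoint T) := by
  simp [blockNT, blockTN, adjoint_comp, adjoint_injN, adjoint_projT, comp_assoc]

lemma adjoint_blockTT (T : FullSp m n →L[ℂ] FullSp m n) :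
    adjoint (blockTT T) = blockTT (adjoint T) := by
  simp [blockTT, adjoint_comp, adjoint_injT, adjoint_projT, comp_assoc]

lemma adjoint_ring_inverse (a : NormalSp m →L[ℂ] NormalSp m) :
    adjoint (Ring.inverse a) = Ring.inverse (adjoint a) := by
  rw [← star_eq_adjoint, ← star_eq_adjoint, Ring.inverse_star]

lemma reflN_comp_injN : reflN m n ∘L injN m n = -(injN m n) := by
  ext a idx; rcases idx with i | p <;> simp [reflN]

lemma reflN_comp_injT : reflN m n ∘L injT m n = injT m n := by
  ext a idx; rcases idx with i | p <;> simp [reflN]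

lemma projN_comp_reflN : projN m n ∘L reflN m n = -(projN m n) := by
  ext a i; simp [reflN]

lemma projT_comp_reflN : projT m n ∘L reflN m n = projT m n := by
  ext a p; simp [reflN]

lemma adjoint_reflN : adjoint (reflN m n) = reflN m n := by
  simp [reflN, map_sub, adjoint_comp, adjoint_injN, adjoint_injT, adjoint_projN, adjoint_projT]


def asm (p : NormalSp m →L[ℂ] NormalSp m) (q : TangSp m n →L[ℂ] NormalSp m)
    (r : NormalSp m →L[ℂ] TangSp m n) (s : TangSp m n →L[ℂ] TangSp m n) :
    FullSp m n →L[ℂ] FullSp m n :=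
  injN m n ∘L (p ∘L projN m n + q ∘L projT m n)
    + injT m n ∘L (r ∘L projN m n + s ∘L projT m n)

lemma adjoint_asm (p q r s) :
    adjoint (asm (m := m) (n := n) p q r s)
      = asm (adjoint p) (adjoint r) (adjoint q) (adjoint s) := by
  simp only [asm, map_add, adjoint_comp, adjoint_injN, adjoint_injT, adjoint_projN,
    adjoint_projT, add_comp, comp_add, comp_assoc]
  abel

lemma reflN_comp_asm (p q r s) :
    reflN m n ∘L asm (m := m) (n := n) p q r s = asm (-p) (-q) r s := by
  simp only [asm, comp_add, ← comp_assoc, reflN_comp_injN, reflN_comp_injT, neg_comp, comp_neg]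

lemma asm_comp_reflN (p q r s) :
    asm (m := m) (n := n) p q r s ∘L reflN m n = asm (-p) q (-r) s := by
  simp only [asm, add_comp, comp_assoc, projN_comp_reflN, projT_comp_reflN, neg_comp, comp_neg]

lemma hatT_eq_asm (T : FullSp m n →L[ℂ] FullSp m n) :
    hatT T = asm (Ring.inverse (blockNN T)) (-(Ring.inverse (blockNN T) ∘L blockNT T))
      (blockTN T ∘L Ring.inverse (blockNN T))
      (blockTT T - (blockTN T ∘L Ring.inverse (blockNN T)) ∘L blockNT T) := by
  simp only [hatT, asm, sub_eq_add_neg, neg_comp]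

/-- The key algebraic identity: `adjoint (N ∘ Â(T)) = N ∘ Â(T*)`. -/
lemma adjoint_reflN_hatT (T : FullSp m n →L[ℂ] FullSp m n) :
    adjoint (reflN m n ∘L hatT T) = reflN m n ∘L hatT (adjoint T) := by
  have h1 : adjoint (hatT T) = (reflN m n ∘L hatT (adjoint T)) ∘L reflN m n := by
    rw [hatT_eq_asm T, hatT_eq_asm (adjoint T), adjoint_asm, reflN_comp_asm, asm_comp_reflN]
    simp only [adjoint_blockNN, adjoint_blockNT, adjoint_blockTN, adjoint_blockTT,
      adjoint_ring_inverse, map_sub, adjoint_comp, map_neg, neg_neg, comp_assoc]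
  rw [adjoint_comp, adjoint_reflN, h1]
  ext1 v
  simp only [comp_apply]
  congr 1
  have : reflN m n (reflN m n v) = v := by
    ext idx; rcases idx with i | p <;> simp [reflN]
  rw [this]



section bilin
variable {X E F G : Type*} [NormedAddCommGroup X] [NormedSpace ℝ X]
  [NormedAddCommGroup E] [NormedSpace ℂ E] [NormedAddCommGroup F] [NormedSpace ℂ F]
  [NormedAddCommGroup G] [NormedSpace ℂ G]

lemma isBBM_compC : IsBoundedBilinearMap ℝ
    (fun p : (F →L[ℂ] G) × (E →L[ℂ] F) => p.1.comp p.2) where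
  add_left f f' g := by ext x; simp
  smul_left r f g := by ext x; simp
  add_right f g g' := by ext x; simp
  smul_right r f g := by ext x; simp
  bound := ⟨1, one_pos, fun f g => by simpa using ContinuousLinearMap.opNorm_comp_le f g⟩

lemma isBBM_applyC : IsBoundedBilinearMap ℝ
    (fun p : (E →L[ℂ] F) × E => p.1 p.2) where
  add_left f f' x := by simp
  smul_left r f x := by simp
  add_right f x y := by simp
  smul_right r f x := by simp
  bound := ⟨1, one_pos, fun f x => by simpa using f.le_opNorm x⟩

lemma _root_.ContDiff.clm_compC {nn : WithTop ℕ∞} {u : X → (F →L[ℂ] G)} {v : X → (E →L[ℂ] F)}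
    (hu : ContDiff ℝ nn u) (hv : ContDiff ℝ nn v) :
    ContDiff ℝ nn (fun x => (u x).comp (v x)) :=
  isBBM_compC.contDiff.comp₂ (g := fun p => p.1.comp p.2) hu hv

lemma _root_.ContDiff.clm_applyC {nn : WithTop ℕ∞} {u : X → (E →L[ℂ] F)} {v : X → E}
    (hu : ContDiff ℝ nn u) (hv : ContDiff ℝ nn v) :
    ContDiff ℝ nn (fun x => (u x) (v x)) :=
  isBBM_applyC.contDiff.comp₂ (g := fun p : (E →L[ℂ] F) × E => p.1 p.2) hu hv

end bilin

-- adjoint as a real CLM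
def adjR : (FullSp m n →L[ℂ] FullSp m n) →L[ℝ] (FullSp m n →L[ℂ] FullSp m n) :=
  LinearMap.toContinuousLinearMap
  { toFun := adjoint
    map_add' := fun x y => map_add (ContinuousLinearMap.adjoint (𝕜 := ℂ)) x y
    map_smul' := fun r x => by
      show adjoint (r • x) = r • adjoint x
      have h1 : ∀ y : FullSp m n →L[ℂ] FullSp m n, (r • y) = ((r : ℂ) • y) := by
        intro y; ext w
        simp [Complex.real_smul]
      rw [h1 x, h1 (adjoint x), LinearIsometryEquiv.map_smulₛₗ]
      norm_num
      exact h1 _ }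

lemma adjR_apply (T : FullSp m n →L[ℂ] FullSp m n) : adjR T = adjoint T := rfl

lemma contDiff_hatT {A : Rn n → FullSp m n →L[ℂ] FullSp m n} (hA : ContDiff ℝ 1 A)
    (hAinv : ∀ x, IsUnit (blockNN (A x))) :
    ContDiff ℝ 1 (fun x => hatT (A x)) := by
  have hNN : ContDiff ℝ 1 (fun x => blockNN (A x)) := by
    unfold blockNN
    exact ContDiff.clm_compC contDiff_const (ContDiff.clm_compC hA contDiff_const)
  have hNT : ContDiff ℝ 1 (fun x => blockNT (A x)) := by
    unfold blockNT
    exact ContDiff.clm_compC contDiff_const (ContDiff.clm_compC hA contDiff_const)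
  have hTN : ContDiff ℝ 1 (fun x => blockTN (A x)) := by
    unfold blockTN
    exact ContDiff.clm_compC contDiff_const (ContDiff.clm_compC hA contDiff_const)
  have hTT : ContDiff ℝ 1 (fun x => blockTT (A x)) := by
    unfold blockTT
    exact ContDiff.clm_compC contDiff_const (ContDiff.clm_compC hA contDiff_const)
  have hInv : ContDiff ℝ 1 (fun x => Ring.inverse (blockNN (A x))) := by
    rw [contDiff_iff_contDiffAt]
    intro x
    exact (contDiffAt_ringInverse ℝ (hAinv x).unit).comp x hNN.contDiffAt
  unfold hatT
  exact ((contDiff_const (c := injN m n)).clm_compC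
      ((hInv.clm_compC contDiff_const).sub
        ((hInv.clm_compC hNT).clm_compC contDiff_const))).add
    ((contDiff_const (c := injT m n)).clm_compC
      (((hTN.clm_compC hInv).clm_compC contDiff_const).add
        ((hTT.sub ((hTN.clm_compC hInv).clm_compC hNT)).clm_compC contDiff_const)))



-- scalar integration by parts
lemma ibp (k : Fin n) (a b : Rn n → ℂ) (ha : ContDiff ℝ 1 a) (hb : ContDiff ℝ 1 b)
    (hac : HasCompactSupport a) :
    ∫ x, (starRingEnd ℂ) (pd k a x) * b x = - ∫ x, (starRingEnd ℂ) (a x) * pd k b x := by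
  classical
  set v : Rn n := EuclideanSpace.single k 1 with hv
  set u : Rn n → ℂ := fun x => (starRingEnd ℂ) (a x) with hu_def
  have hu : ContDiff ℝ 1 u := Complex.conjCLE.toContinuousLinearMap.contDiff.comp ha
  have hud : ∀ x w, fderiv ℝ u x w = (starRingEnd ℂ) (fderiv ℝ a x w) := by
    intro x w
    have h0 : u = (⇑Complex.conjCLE) ∘ a := rfl
    rw [h0, Complex.conjCLE.comp_fderiv]
    rfl
  have huc : HasCompactSupport u := hac.comp_left (g := starRingEnd ℂ) (by simp)
  have cf : Continuous (fun x => fderiv ℝ u x v) :=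
    (hu.continuous_fderiv one_ne_zero).clm_apply continuous_const
  have cb : Continuous b := hb.continuous
  have cu : Continuous u := hu.continuous
  have cgb : Continuous (fun x => fderiv ℝ b x v) :=
    (hb.continuous_fderiv one_ne_zero).clm_apply continuous_const
  have i1 : MeasureTheory.Integrable (fun x => fderiv ℝ u x v * b x) :=
    (cf.mul cb).integrable_of_hasCompactSupport
      ((HasCompactSupport.fderiv_apply (𝕜 := ℝ) huc v).mul_right)
  have i2 : MeasureTheory.Integrable (fun x => u x * fderiv ℝ b x v) :=
    (cu.mul cgb).integrable_of_hasCompactSupport huc.mul_right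
  have i3 : MeasureTheory.Integrable (fun x => u x * b x) :=
    (cu.mul cb).integrable_of_hasCompactSupport huc.mul_right
  have H := integral_mul_fderiv_eq_neg_fderiv_mul_of_integrable i1 i2 i3
    (fun x _ => hu.differentiable one_ne_zero x) (fun x _ => hb.differentiable one_ne_zero x)
  have e1 : (fun x => (starRingEnd ℂ) (pd k a x) * b x) = fun x => fderiv ℝ u x v * b x := by
    funext x; rw [hud x v]; rfl
  have e2 : (fun x => (starRingEnd ℂ) (a x) * pd k b x) = fun x => u x * fderiv ℝ b x v := by
    funext x; rfl
  rw [e1, e2, H]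
  simp

lemma pd_continuous (k : Fin n) (a : Rn n → ℂ) (ha : ContDiff ℝ 1 a) :
    Continuous (pd k a) :=
  (ha.continuous_fderiv one_ne_zero).clm_apply continuous_const

lemma pd_compact_support (k : Fin n) (a : Rn n → ℂ) (hac : HasCompactSupport a) :
    HasCompactSupport (pd k a) :=
  HasCompactSupport.fderiv_apply (𝕜 := ℝ) hac _


/-- the duality identity `(g, N(BD)f) = ((−D(A*)^)g, Nf)` for test
functions, where `B = Â` and `Ã = (A*)^`. -/
theorem statement12 (m n : ℕ) (hm : 1 ≤ m) (hn : 1 ≤ n)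
    (A : Rn n → FullSp m n →L[ℂ] FullSp m n) (hA : ContDiff ℝ 1 A)
    (hAinv : ∀ x, IsUnit (blockNN (A x)))
    (f g : Rn n → FullSp m n) (hf : ContDiff ℝ 1 f) (hg : ContDiff ℝ 1 g)
    (hfc : HasCompactSupport f) (hgc : HasCompactSupport g) :
    ∫ x, (inner ℂ (reflN m n (hatT (A x) (Dop f x))) (g x) : ℂ)
      = - ∫ x, (inner ℂ (reflN m n (f x))
          (Dop (fun y => hatT (ContinuousLinearMap.adjoint (A y)) (g y)) x) : ℂ) := by
  classical
  set h : Rn n → FullSp m n := fun y => hatT (adjoint (A y)) (g y) with hdef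
  -- Step 1: adjoint identity pointwise
  have key : ∀ x, (inner ℂ (reflN m n (hatT (A x) (Dop f x))) (g x) : ℂ)
      = inner ℂ (Dop f x) (reflN m n (h x)) := by
    intro x
    have h1 : reflN m n ∘L hatT (A x)
        = adjoint (reflN m n ∘L hatT (adjoint (A x))) := by
      rw [adjoint_reflN_hatT, ContinuousLinearMap.adjoint_adjoint]
    calc (inner ℂ (reflN m n (hatT (A x) (Dop f x))) (g x) : ℂ)
        = inner ℂ ((reflN m n ∘L hatT (A x)) (Dop f x)) (g x) := rfl
      _ = inner ℂ ((adjoint (reflN m n ∘L hatT (adjoint (A x)))) (Dop f x)) (g x) := by rw [← h1]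
      _ = inner ℂ (Dop f x) ((reflN m n ∘L hatT (adjoint (A x))) (g x)) :=
          ContinuousLinearMap.adjoint_inner_left _ _ _
      _ = inner ℂ (Dop f x) (reflN m n (h x)) := rfl
  -- Step 2: smoothness and support of h
  have hadj : ContDiff ℝ 1 (fun x => adjoint (A x)) := by
    have := ((adjR (m := m) (n := n)).contDiff (n := (1 : WithTop ℕ∞))).comp hA
    exact this
  have hinv' : ∀ x, IsUnit (blockNN (adjoint (A x))) := by
    intro x
    rw [← adjoint_blockNN, ← star_eq_adjoint]
    exact (hAinv x).star
  have hh : ContDiff ℝ 1 h := (contDiff_hatT hadj hinv').clm_applyC hg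
  have hhc : HasCompactSupport h := by
    apply hgc.mono'
    intro x hx
    have : g x ≠ 0 := by
      intro h0
      apply hx
      simp only [hdef, h0, map_zero]
    exact subset_closure this
  -- components
  have hfcd : ∀ idx, ContDiff ℝ 1 (fun y => f y idx) := by
    intro idx
    have := (((EuclideanSpace.proj (𝕜 := ℂ) idx).restrictScalars ℝ).contDiff
      (n := (1 : WithTop ℕ∞))).comp hf
    exact this
  have hhcd : ∀ idx, ContDiff ℝ 1 (fun y => h y idx) := by
    intro idx
    have := (((EuclideanSpace.proj (𝕜 := ℂ) idx).restrictScalars ℝ).contDiff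
      (n := (1 : WithTop ℕ∞))).comp hh
    exact this
  have hfcs : ∀ idx, HasCompactSupport (fun y => f y idx) := fun idx =>
    hfc.comp_left (g := fun w : FullSp m n => w idx) rfl
  have hhcs : ∀ idx, HasCompactSupport (fun y => h y idx) := fun idx =>
    hhc.comp_left (g := fun w : FullSp m n => w idx) rfl
  -- term functions
  let T1 : Fin m × Fin n → Rn n → ℂ :=
    fun p x => (starRingEnd ℂ) (pd p.2 (fun y => f y (Sum.inr p)) x) * h x (Sum.inl p.1)
  let T2 : Fin m × Fin n → Rn n → ℂ :=
    fun p x => (starRingEnd ℂ) (pd p.2 (fun y => f y (Sum.inl p.1)) x) * h x (Sum.inr p)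
  let T3 : Fin m × Fin n → Rn n → ℂ :=
    fun p x => (starRingEnd ℂ) (f x (Sum.inl p.1)) * pd p.2 (fun y => h y (Sum.inr p)) x
  let T4 : Fin m × Fin n → Rn n → ℂ :=
    fun p x => (starRingEnd ℂ) (f x (Sum.inr p)) * pd p.2 (fun y => h y (Sum.inl p.1)) x
  have iT1 : ∀ p, MeasureTheory.Integrable (T1 p) := fun p =>
    ((Complex.continuous_conj.comp (pd_continuous _ _ (hfcd _))).mul
      (hhcd _).continuous).integrable_of_hasCompactSupport ((hhcs _).mul_left)
  have iT2 : ∀ p, MeasureTheory.Integrable (T2 p) := fun p =>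
    ((Complex.continuous_conj.comp (pd_continuous _ _ (hfcd _))).mul
      (hhcd _).continuous).integrable_of_hasCompactSupport ((hhcs _).mul_left)
  have iT3 : ∀ p, MeasureTheory.Integrable (T3 p) := fun p =>
    ((Complex.continuous_conj.comp (hfcd _).continuous).mul
      (pd_continuous _ _ (hhcd _))).integrable_of_hasCompactSupport
      ((pd_compact_support _ _ (hhcs _)).mul_left)
  have iT4 : ∀ p, MeasureTheory.Integrable (T4 p) := fun p =>
    ((Complex.continuous_conj.comp (hfcd _).continuous).mul
      (pd_continuous _ _ (hhcd _))).integrable_of_hasCompactSupport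
      ((pd_compact_support _ _ (hhcs _)).mul_left)
  -- pointwise expansions
  have e1 : ∀ x, (inner ℂ (Dop f x) (reflN m n (h x)) : ℂ)
      = ∑ p : Fin m × Fin n, (-(T1 p x) + -(T2 p x)) := by
    intro x
    rw [PiLp.inner_apply, Fintype.sum_sum_type]
    simp only [RCLike.inner_apply, reflN, ContinuousLinearMap.sub_apply,
      ContinuousLinearMap.comp_apply, injN_apply, injT_apply, projN_apply, projT_apply,
      Dop, Sum.elim_inl, Sum.elim_inr, PiLp.sub_apply, map_sum, map_neg, neg_mul,
      Finset.sum_mul, Fintype.sum_prod_type, T1, T2]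
    rw [← Finset.sum_add_distrib]
    refine Finset.sum_congr rfl fun i _ => ?_
    simp only [sub_zero, zero_sub, neg_mul, mul_neg, Finset.mul_sum, Finset.sum_mul,
      ← Finset.sum_neg_distrib]
    rw [← Finset.sum_add_distrib]
    refine Finset.sum_congr rfl fun k _ => ?_
    ring
  have e2 : ∀ x, (inner ℂ (reflN m n (f x)) (Dop h x) : ℂ)
      = ∑ p : Fin m × Fin n, (-(T3 p x) + -(T4 p x)) := by
    intro x
    rw [PiLp.inner_apply, Fintype.sum_sum_type]
    simp only [RCLike.inner_apply, reflN, ContinuousLinearMap.sub_apply,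
      ContinuousLinearMap.comp_apply, injN_apply, injT_apply, projN_apply, projT_apply,
      Dop, Sum.elim_inl, Sum.elim_inr, PiLp.sub_apply, map_sub, map_zero, zero_sub, map_neg,
      neg_mul, mul_neg, Finset.mul_sum, Fintype.sum_prod_type, T3, T4]
    rw [← Finset.sum_add_distrib]
    refine Finset.sum_congr rfl fun i _ => ?_
    simp only [sub_zero, zero_sub, neg_mul, mul_neg, Finset.mul_sum, Finset.sum_mul,
      ← Finset.sum_neg_distrib]
    rw [← Finset.sum_add_distrib]
    refine Finset.sum_congr rfl fun k _ => ?_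
    ring
  -- integration by parts per component
  have hibp1 : ∀ p : Fin m × Fin n, (∫ x, T1 p x) = - ∫ x, T4 p x := fun p =>
    ibp p.2 _ _ (hfcd _) (hhcd _) (hfcs _)
  have hibp2 : ∀ p : Fin m × Fin n, (∫ x, T2 p x) = - ∫ x, T3 p x := fun p =>
    ibp p.2 _ _ (hfcd _) (hhcd _) (hfcs _)
  -- assemble
  calc ∫ x, (inner ℂ (reflN m n (hatT (A x) (Dop f x))) (g x) : ℂ)
      = ∫ x, ∑ p : Fin m × Fin n, (-(T1 p x) + -(T2 p x)) := by
        refine integral_congr_ae (Filter.Eventually.of_forall fun x => ?_)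
        exact (key x).trans (e1 x)
    _ = ∑ p : Fin m × Fin n, ∫ x, (-(T1 p x) + -(T2 p x)) :=
        MeasureTheory.integral_finset_sum _ (fun p _ => ((iT1 p).neg.add (iT2 p).neg))
    _ = ∑ p : Fin m × Fin n, ((∫ x, T3 p x) + ∫ x, T4 p x) := by
        refine Finset.sum_congr rfl (fun p _ => ?_)
        have n1 : Integrable (fun x => -(T1 p x)) := (iT1 p).neg
        have n2 : Integrable (fun x => -(T2 p x)) := (iT2 p).neg
        rw [MeasureTheory.integral_add n1 n2,
          MeasureTheory.integral_neg, MeasureTheory.integral_neg, hibp1 p, hibp2 p]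
        ring
    _ = ∑ p : Fin m × Fin n, ∫ x, (T3 p x + T4 p x) := by
        refine Finset.sum_congr rfl (fun p _ => ?_)
        rw [MeasureTheory.integral_add (iT3 p) (iT4 p)]
    _ = ∫ x, ∑ p : Fin m × Fin n, (T3 p x + T4 p x) :=
        (MeasureTheory.integral_finset_sum _ (fun p _ => ((iT3 p).add (iT4 p)))).symm
    _ = - ∫ x, (inner ℂ (reflN m n (f x)) (Dop h x) : ℂ) := by
        rw [← MeasureTheory.integral_neg]
        refine integral_congr_ae (Filter.Eventually.of_forall fun x => ?_)
        show (∑ p : Fin m × Fin n, (T3 p x + T4 p x))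
          = -(inner ℂ (reflN m n (f x)) (Dop h x) : ℂ)
        rw [e2 x, ← Finset.sum_neg_distrib]
        refine Finset.sum_congr rfl (fun p _ => ?_)
        ring


end LayerPotential
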